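/- Let f be a concave function on [0,1]^d that is C-smooth, i.e., f(z + α(y − z)) ≥ f(z) + α ∇f(z)·(y − z) − (C/2)α² for all y, z ∈ [0,1]^d and α ∈ [0,1]. Suppose a sequence x₁, x₂, … in [0,1]^d and a point x* satisfy ∇f(x̄_t)·(x_{t+1} − x̄_t) ≥ f(x*) − f(x̄_t) for all t ≥ 0 (where x̄_t = (1/t)∑_{s=1}^t x_s and x̄_0 is arbitrary). Then for all T ≥ 1, f(x*) − f(x̄_T) ≤ C·log₂(2T)/(2T). -/

import Mathlib

open Finset

private lemma log_ratio_aux (t : ℕ) (ht : 1 ≤ t) :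
    (1:ℝ) / (t + 1) ≤ Real.logb 2 (t + 1) - Real.logb 2 t := by
  have ht0 : (0:ℝ) < t := by exact_mod_cast ht
  have h1 : Real.logb 2 ((t:ℝ)+1) - Real.logb 2 t = Real.logb 2 (((t:ℝ)+1)/t) := by
    rw [Real.logb_div (by positivity) (by positivity)]
  rw [h1]
  have hlog : (1:ℝ)/(t+1) ≤ Real.log (((t:ℝ)+1)/t) := by
    have h2 := Real.log_le_sub_one_of_pos (x := (t:ℝ)/(t+1)) (by positivity)
    have hinv : Real.log ((t:ℝ)/((t:ℝ)+1)) = - Real.log (((t:ℝ)+1)/t) := by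
      rw [← Real.log_inv]
      congr 1
      field_simp
    rw [hinv] at h2
    have : (t:ℝ)/(t+1) - 1 = -(1/(t+1)) := by field_simp; ring
    linarith [this ▸ h2]
  have hl2 : Real.log 2 ≤ 1 := by
    have := Real.log_le_sub_one_of_pos (x := (2:ℝ)) (by norm_num)
    linarith
  have hl2' : 0 < Real.log 2 := Real.log_pos (by norm_num)
  have hnn : 0 ≤ Real.log (((t:ℝ)+1)/t) :=
    Real.log_nonneg (by rw [le_div_iff₀ ht0]; linarith)
  calc (1:ℝ)/(t+1) ≤ Real.log (((t:ℝ)+1)/t) := hlog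
    _ ≤ Real.log (((t:ℝ)+1)/t) / Real.log 2 := by
        rw [le_div_iff₀ hl2']
        nlinarith
    _ = Real.logb 2 (((t:ℝ)+1)/t) := rfl

/-- Frank–Wolfe convergence: if `f` is concave and `C`-smooth on `[0,1]^d` and the sequence
satisfies the linear-optimization condition `∇f(x̄_t)·(x_{t+1} − x̄_t) ≥ f(x*) − f(x̄_t)`,
then `f(x*) − f(x̄_T) ≤ C log₂(2T)/(2T)` for all `T ≥ 1`. -/
theorem stmt_3 (d : ℕ) (C : ℝ) (hC : 0 ≤ C)
    (f : (Fin d → ℝ) → ℝ) (gf : (Fin d → ℝ) → (Fin d → ℝ))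
    (hf : ConcaveOn ℝ (Set.Icc (0 : Fin d → ℝ) 1) f)
    (hsmooth : ∀ y ∈ Set.Icc (0 : Fin d → ℝ) 1, ∀ z ∈ Set.Icc (0 : Fin d → ℝ) 1,
        ∀ α ∈ Set.Icc (0 : ℝ) 1,
        f (z + α • (y - z)) ≥ f z + α * (∑ i, gf z i * (y i - z i)) - C / 2 * α ^ 2)
    (x : ℕ → (Fin d → ℝ)) (hx : ∀ t, x t ∈ Set.Icc (0 : Fin d → ℝ) 1)
    (xstar : Fin d → ℝ) (hxstar : xstar ∈ Set.Icc (0 : Fin d → ℝ) 1)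
    (xbar : ℕ → (Fin d → ℝ))
    (hxbar0 : xbar 0 ∈ Set.Icc (0 : Fin d → ℝ) 1)
    (hxbar : ∀ t : ℕ, 1 ≤ t → xbar t = (t : ℝ)⁻¹ • ∑ s ∈ Finset.Icc 1 t, x s)
    (hFW : ∀ t : ℕ, (∑ i, gf (xbar t) i * (x (t + 1) i - xbar t i)) ≥ f xstar - f (xbar t)) :
    ∀ T : ℕ, 1 ≤ T → f xstar - f (xbar T) ≤ C * Real.logb 2 (2 * T) / (2 * T) := by
  -- membership of averages
  have hmem : ∀ t, xbar t ∈ Set.Icc (0 : Fin d → ℝ) 1 := by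
    intro t
    rcases Nat.eq_zero_or_pos t with h | h
    · rw [h]; exact hxbar0
    · rw [hxbar t h, Set.mem_Icc]
      have ht0 : (0:ℝ) < t := by exact_mod_cast h
      constructor <;> intro i <;>
        simp only [Pi.smul_apply, Finset.sum_apply, Pi.zero_apply, Pi.one_apply, smul_eq_mul]
      · apply mul_nonneg (by positivity)
        exact Finset.sum_nonneg fun s _ => (hx s).1 i
      · have hsum : ∑ s ∈ Finset.Icc 1 t, x s i ≤ (t:ℝ) := by
          calc ∑ s ∈ Finset.Icc 1 t, x s i ≤ ∑ s ∈ Finset.Icc 1 t, (1:ℝ) :=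
                Finset.sum_le_sum fun s _ => (hx s).2 i
            _ = (t:ℝ) := by simp [Nat.card_Icc]
        have := mul_le_mul_of_nonneg_left hsum (inv_nonneg.2 ht0.le)
        rwa [inv_mul_cancel₀ ht0.ne'] at this
  -- update rule
  have hupdate : ∀ t : ℕ, xbar (t+1) = xbar t + ((t:ℝ)+1)⁻¹ • (x (t+1) - xbar t) := by
    intro t
    rcases Nat.eq_zero_or_pos t with h | h
    · subst h
      rw [hxbar 1 le_rfl]
      funext i
      simp
    · rw [hxbar (t+1) (by omega), hxbar t h]
      have ht0 : (0:ℝ) < t := by exact_mod_cast h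
      funext i
      have hsplit : ∑ s ∈ Finset.Icc 1 (t+1), x s i
          = (∑ s ∈ Finset.Icc 1 t, x s i) + x (t+1) i := by
        rw [Finset.sum_Icc_succ_top (by omega)]
      simp only [Pi.smul_apply, Pi.add_apply, Pi.sub_apply, Finset.sum_apply, smul_eq_mul]
      push_cast
      rw [hsplit]
      field_simp
      ring
  -- one-step recursion
  have hstep : ∀ t : ℕ, f xstar - f (xbar (t+1)) ≤
      (1 - ((t:ℝ)+1)⁻¹) * (f xstar - f (xbar t)) + C/2 * (((t:ℝ)+1)⁻¹)^2 := by
    intro t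
    set α : ℝ := ((t:ℝ)+1)⁻¹ with hα
    have ht1 : (1:ℝ) ≤ (t:ℝ)+1 := by have : (0:ℝ) ≤ t := Nat.cast_nonneg t; linarith
    have hα0 : 0 < α := by positivity
    have hα1 : α ≤ 1 := by rw [hα]; rw [inv_le_one_iff₀]; right; exact ht1
    have hs := hsmooth (x (t+1)) (hx _) (xbar t) (hmem t) α ⟨hα0.le, hα1⟩
    rw [← hupdate t] at hs
    have hfw := hFW t
    nlinarith [mul_le_mul_of_nonneg_left hfw hα0.le]
  -- main induction
  have key : ∀ T : ℕ, 1 ≤ T → f xstar - f (xbar T) ≤ C * (1 + Real.logb 2 T) / (2*T) := by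
    intro T hT
    induction T with
    | zero => omega
    | succ n ih =>
      rcases Nat.eq_zero_or_pos n with h | h
      · subst h
        have h0 := hstep 0
        norm_num at h0 ⊢
        linarith
      · have ihn := ih h
        have hs := hstep n
        have hlog := log_ratio_aux n h
        have hn0 : (0:ℝ) < n := by exact_mod_cast h
        have hn1 : (0:ℝ) < (n:ℝ)+1 := by positivity
        set L := Real.logb 2 (n:ℝ) with hL
        set L' := Real.logb 2 ((n:ℝ)+1) with hL'
        have step2 : (1 - ((n:ℝ)+1)⁻¹) * (f xstar - f (xbar n)) + C/2 * (((n:ℝ)+1)⁻¹)^2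
            ≤ C * (1 + L) / (2*((n:ℝ)+1)) + C/(2*((n:ℝ)+1)^2) := by
          have h1 : 0 ≤ 1 - ((n:ℝ)+1)⁻¹ := by
            have : ((n:ℝ)+1)⁻¹ ≤ 1 := by rw [inv_le_one_iff₀]; right; linarith
            linarith
          have h2 := mul_le_mul_of_nonneg_left ihn h1
          have h3 : (1 - ((n:ℝ)+1)⁻¹) * (C * (1 + L) / (2*(n:ℝ)))
              = C * (1 + L) / (2*((n:ℝ)+1)) := by
            field_simp
            ring
          have h4 : C/2 * (((n:ℝ)+1)⁻¹)^2 = C/(2*((n:ℝ)+1)^2) := by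
            field_simp
          linarith [h3 ▸ h2, h4 ▸ le_refl (C/2 * (((n:ℝ)+1)⁻¹)^2)]
        have step3 : C/(2*((n:ℝ)+1)^2) ≤ C * (L' - L) / (2*((n:ℝ)+1)) := by
          have h5 : C/(2*((n:ℝ)+1)^2) = (C/(2*((n:ℝ)+1))) * (1/((n:ℝ)+1)) := by
            rw [div_mul_div_comm, mul_one]; congr 1; ring
          have h6 : C * (L' - L) / (2*((n:ℝ)+1)) = (C/(2*((n:ℝ)+1))) * (L' - L) := by
            ring
          rw [h5, h6]
          exact mul_le_mul_of_nonneg_left hlog (by positivity)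
        have hfin : C * (1 + L) / (2*((n:ℝ)+1)) + C * (L' - L) / (2*((n:ℝ)+1))
            = C * (1 + L') / (2*((n:ℝ)+1)) := by ring
        push_cast
        linarith [hs, step2, step3, hfin ▸ le_refl (C * (1 + L') / (2*((n:ℝ)+1)))]
  -- convert logb
  intro T hT
  have hT0 : (0:ℝ) < T := by exact_mod_cast hT
  have hlogb : Real.logb 2 (2 * (T:ℝ)) = 1 + Real.logb 2 (T:ℝ) := by
    rw [Real.logb_mul (by norm_num) hT0.ne', Real.logb_self_eq_one (by norm_num)]
  rw [hlogb]
  exact key T hT
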